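/- Let H be a complex Hilbert space and let a be a bounded linear operator on H with ‖a‖ ≤ 1. Then the Cesàro averages (1/n) Σ_{k=1}^{n} a^k converge in the strong operator topology (i.e. pointwise in norm on H) to the orthogonal projection q of H onto the closed subspace { ξ ∈ H : a ξ = ξ }, and this projection satisfies q a = a q = q. -/

import Mathlib

open Filter Topology

private lemma inv_smul_tendsto_zero {H : Type*} [NormedAddCommGroup H]
    [NormedSpace ℂ H] (v : ℕ → H) (C : ℝ) (hv : ∀ n, ‖v n‖ ≤ C) :
    Tendsto (fun n : ℕ => (n : ℂ)⁻¹ • v n) atTop (𝓝 0) := by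
  have h0 : Tendsto (fun n : ℕ => (n : ℝ)⁻¹ * C) atTop (𝓝 0) := by
    simpa using (tendsto_inv_atTop_nhds_zero_nat).mul_const C
  refine squeeze_zero_norm (fun n => ?_) h0
  rw [norm_smul]
  have : ‖((n : ℂ)⁻¹)‖ = (n : ℝ)⁻¹ := by simp
  rw [this]
  exact mul_le_mul_of_nonneg_left (hv n) (by positivity)

/-- For a contraction `a` on a complex Hilbert space `H`, the Cesàro
averages `(1/n) ∑_{k=1}^n a^k` converge in the strong operator topology to the orthogonal
projection `q` onto `{ξ : a ξ = ξ}` (the self-adjoint idempotent with that range), and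
`q a = a q = q`. -/
theorem cesaro_tendsto_orthogonalProjection {H : Type*} [NormedAddCommGroup H]
    [InnerProductSpace ℂ H] [CompleteSpace H]
    (a : H →L[ℂ] H) (ha : ‖a‖ ≤ 1) :
    ∃ q : H →L[ℂ] H, IsSelfAdjoint q ∧ q ∘L q = q ∧
      Set.range q = {ξ : H | a ξ = ξ} ∧
      (∀ ξ : H, Tendsto (fun n : ℕ => ((n : ℂ)⁻¹ • ∑ k ∈ Finset.Icc 1 n, a ^ k) ξ)
        atTop (𝓝 (q ξ))) ∧
      q ∘L a = q ∧ a ∘L q = q := by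
  set K : Submodule ℂ H := LinearMap.eqLocus (a : H →ₗ[ℂ] H) 1 with hK
  have hmem : ∀ x : H, x ∈ K ↔ a x = x := fun x => Iff.rfl
  haveI : CompleteSpace K := IsClosed.completeSpace_coe
    (hs := isClosed_eq a.continuous continuous_id)
  set q : H →L[ℂ] H := K.subtypeL ∘L K.orthogonalProjectionOnto with hq
  have hqmem : ∀ ξ, q ξ ∈ K := fun ξ => (K.orthogonalProjectionOnto ξ).2
  have hqfix : ∀ ξ ∈ K, q ξ = ξ := by
    intro ξ hξ
    simp only [hq, ContinuousLinearMap.comp_apply, Submodule.subtypeL_apply]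
    exact congrArg Subtype.val (Submodule.orthogonalProjectionOnto_mem_subspace_eq_self ⟨ξ, hξ⟩)
  -- pointwise norm bound
  have hpow : ∀ (n : ℕ) (ξ : H), ‖(a ^ n) ξ‖ ≤ ‖ξ‖ := by
    intro n ξ
    induction n with
    | zero => simp
    | succ m ih =>
      rw [pow_succ']
      calc ‖(a * a ^ m) ξ‖ = ‖a ((a ^ m) ξ)‖ := rfl
      _ ≤ ‖(a ^ m) ξ‖ := by simpa using a.le_of_opNorm_le ha ((a ^ m) ξ)
      _ ≤ ‖ξ‖ := ih
  -- birkhoff convergence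
  have hbirk : ∀ ξ : H, Tendsto (fun n : ℕ => birkhoffAverage ℂ a _root_.id n ξ)
      atTop (𝓝 (q ξ)) := fun ξ =>
    a.tendsto_birkhoffAverage_orthogonalProjection ha ξ
  have hbirk_eq : ∀ (n : ℕ) (ξ : H),
      birkhoffAverage ℂ a _root_.id n ξ = (n : ℂ)⁻¹ • ∑ k ∈ Finset.range n, (a ^ k) ξ := by
    intro n ξ
    simp [birkhoffAverage, birkhoffSum, ← ContinuousLinearMap.coe_pow]
  -- sum identity 1
  have hsum1 : ∀ (n : ℕ) (ξ : H), ∑ k ∈ Finset.Icc 1 n, (a ^ k) ξ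
      = (∑ k ∈ Finset.range n, (a ^ k) ξ) + ((a ^ n) ξ - ξ) := by
    intro n ξ
    induction n with
    | zero => simp
    | succ m ih =>
      rw [Finset.sum_Icc_succ_top (by omega), Finset.sum_range_succ, ih]
      abel
  -- sum identity 2
  have hsum2 : ∀ (n : ℕ) (ξ : H), ∑ k ∈ Finset.Icc 1 n, (a ^ (k + 1)) ξ
      = (∑ k ∈ Finset.Icc 1 n, (a ^ k) ξ) + ((a ^ (n + 1)) ξ - a ξ) := by
    intro n ξ
    induction n with
    | zero => simp
    | succ m ih =>
      rw [Finset.sum_Icc_succ_top (by omega), Finset.sum_Icc_succ_top (by omega), ih]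
      abel
  -- main convergence with Icc sums
  have hmain : ∀ ξ : H, Tendsto (fun n : ℕ => ((n : ℂ)⁻¹ • ∑ k ∈ Finset.Icc 1 n, a ^ k) ξ)
      atTop (𝓝 (q ξ)) := by
    intro ξ
    have hdiff : Tendsto (fun n : ℕ => (n : ℂ)⁻¹ • ((a ^ n) ξ - ξ)) atTop (𝓝 0) := by
      refine inv_smul_tendsto_zero _ (2 * ‖ξ‖) fun n => ?_
      calc ‖(a ^ n) ξ - ξ‖ ≤ ‖(a ^ n) ξ‖ + ‖ξ‖ := norm_sub_le _ _
      _ ≤ ‖ξ‖ + ‖ξ‖ := by linarith [hpow n ξ]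
      _ = 2 * ‖ξ‖ := by ring
    have h := (hbirk ξ).add hdiff
    rw [add_zero] at h
    refine h.congr fun n => ?_
    rw [hbirk_eq]
    simp only [ContinuousLinearMap.smul_apply, ContinuousLinearMap.coe_sum',
      Finset.sum_apply]
    rw [hsum1, smul_add]
  refine ⟨q, ?_, ?_, ?_, hmain, ?_, ?_⟩
  · exact isSelfAdjoint_starProjection K
  · ext ξ
    exact hqfix (q ξ) (hqmem ξ)
  · ext x
    constructor
    · rintro ⟨ξ, rfl⟩
      exact (hmem _).1 (hqmem ξ)
    · intro hx
      exact ⟨x, hqfix x ((hmem x).2 hx)⟩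
  · ext ξ
    have h1 : Tendsto (fun n : ℕ => ((n : ℂ)⁻¹ • ∑ k ∈ Finset.Icc 1 n, a ^ k) (a ξ))
        atTop (𝓝 (q (a ξ))) := hmain (a ξ)
    have h2 : Tendsto (fun n : ℕ => ((n : ℂ)⁻¹ • ∑ k ∈ Finset.Icc 1 n, a ^ k) (a ξ))
        atTop (𝓝 (q ξ)) := by
      have hdiff : Tendsto (fun n : ℕ => (n : ℂ)⁻¹ • ((a ^ (n + 1)) ξ - a ξ)) atTop (𝓝 0) := by
        refine inv_smul_tendsto_zero _ (2 * ‖ξ‖) fun n => ?_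
        have h3 : ‖a ξ‖ ≤ ‖ξ‖ := by simpa using a.le_of_opNorm_le ha ξ
        calc ‖(a ^ (n + 1)) ξ - a ξ‖ ≤ ‖(a ^ (n + 1)) ξ‖ + ‖a ξ‖ := norm_sub_le _ _
        _ ≤ 2 * ‖ξ‖ := by linarith [hpow (n + 1) ξ]
      have h := (hmain ξ).add hdiff
      rw [add_zero] at h
      refine h.congr fun n => ?_
      simp only [ContinuousLinearMap.smul_apply, ContinuousLinearMap.coe_sum',
        Finset.sum_apply]
      rw [← smul_add]
      congr 1
      have hshift : ∀ k, (a ^ k) (a ξ) = (a ^ (k + 1)) ξ := by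
        intro k
        rw [pow_succ]
        simp
      simp only [hshift]
      exact (hsum2 n ξ).symm
    exact tendsto_nhds_unique h1 h2
  · ext ξ
    exact (hmem _).1 (hqmem ξ)
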